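/- arXiv:math/0106037 — 4 statements merged into one kernel-verified Lean document; each statement's English description precedes it below -/
import Mathlib

section
/- For every real number a > 0, every integer N ≥ 2, and every real number z with |z| > N·a, the integral ∫_{-∞}^{∞} (sin(aω)/(aω))^N · e^{-iωz} dω equals 0 (the integrand being extended by the value e^{-iωz} at ω = 0). -/
open MeasureTheory Real Complex
open Convolution FourierTransform Filter Set Pointwise

noncomputable def mulCC : ℂ →L[ℝ] ℂ →L[ℝ] ℂ := ContinuousLinearMap.mul ℝ ℂ

lemma fourier_conv {f g : ℝ → ℂ} (hf : Integrable f) (hg : Integrable g) (w : ℝ) :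
    𝓕 (f ⋆[mulCC] g) w = 𝓕 f w * 𝓕 g w := by
  set e : ℝ → ℂ := fun x => Complex.exp (↑(-2 * π * x * w) * Complex.I) with he
  have he_mul : ∀ s t : ℝ, e (s + t) = e s * e t := by
    intro s t
    simp only [he, ← Complex.exp_add]
    congr 1
    push_cast
    ring
  have he_norm : ∀ x : ℝ, ‖e x‖ = 1 := by
    intro x
    simp only [he]; exact Complex.norm_exp_ofReal_mul_I _
  have he_cont : Continuous e := by
    apply Complex.continuous_exp.comp
    fun_prop
  have hΦ : Integrable (fun p : ℝ × ℝ => e p.1 * (f p.2 * g (p.1 - p.2)))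
      ((volume : Measure ℝ).prod volume) := by
    refine (hf.convolution_integrand mulCC hg).bdd_mul ?_ (Filter.Eventually.of_forall fun p => (he_norm p.1).le)
    exact (he_cont.comp continuous_fst).aestronglyMeasurable
  calc 𝓕 (f ⋆[mulCC] g) w
      = ∫ x : ℝ, e x * ∫ t : ℝ, f t * g (x - t) := by
        rw [Real.fourier_real_eq_integral_exp_smul]
        rfl
    _ = ∫ x : ℝ, ∫ t : ℝ, e x * (f t * g (x - t)) := by
        congr 1 with x
        rw [integral_const_mul]
    _ = ∫ t : ℝ, ∫ x : ℝ, e x * (f t * g (x - t)) := integral_integral_swap hΦ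
    _ = ∫ t : ℝ, ∫ u : ℝ, e (u + t) * (f t * g u) := by
        congr 1 with t
        rw [← integral_add_right_eq_self (fun x => e x * (f t * g (x - t))) t]
        simp
    _ = ∫ t : ℝ, (e t * f t) * ∫ u : ℝ, e u * g u := by
        congr 1 with t
        rw [← integral_const_mul]
        congr 1 with u
        rw [he_mul]; ring
    _ = (∫ t : ℝ, e t * f t) * ∫ u : ℝ, e u * g u := integral_mul_const _ _
    _ = 𝓕 f w * 𝓕 g w := by
        rw [Real.fourier_real_eq_integral_exp_smul,
          Real.fourier_real_eq_integral_exp_smul]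
        rfl
noncomputable def box (a : ℝ) : ℝ → ℂ :=
  Set.indicator (Set.Icc (-a) a) (fun _ => ((2 * a)⁻¹ : ℝ))

noncomputable def sincpow (a : ℝ) (n : ℕ) : ℝ → ℂ := fun ξ =>
  (if ξ = 0 then (1 : ℂ) else ((Real.sin (a * (2 * π * ξ)) / (a * (2 * π * ξ)) : ℝ) : ℂ)) ^ n

lemma box_integrable {a : ℝ} (ha : 0 < a) : Integrable (box a) := by
  rw [box, integrable_indicator_iff measurableSet_Icc]
  exact integrableOn_const measure_Icc_lt_top.ne

lemma box_support {a : ℝ} : Function.support (box a) ⊆ Set.Icc (-a) a :=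
  Set.support_indicator_subset

lemma fourier_box {a : ℝ} (ha : 0 < a) (ξ : ℝ) :
    𝓕 (box a) ξ = sincpow a 1 ξ := by
  rw [Real.fourier_real_eq_integral_exp_smul]
  have : ∀ x : ℝ, Complex.exp (↑(-2 * π * x * ξ) * Complex.I) • box a x
      = Set.indicator (Set.Icc (-a) a)
          (fun x : ℝ => ((2 * a)⁻¹ : ℝ) * Complex.exp ((↑(-2 * π * ξ) * Complex.I) * x)) x := by
    intro x
    by_cases hx : x ∈ Set.Icc (-a) a
    · simp only [box, Set.indicator_of_mem hx, smul_eq_mul]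
      push_cast
      ring_nf
    · simp [box, Set.indicator_of_notMem hx]
  simp_rw [this]
  rw [integral_indicator measurableSet_Icc, integral_const_mul,
    MeasureTheory.integral_Icc_eq_integral_Ioc,
    ← intervalIntegral.integral_of_le (by linarith : -a ≤ a)]
  by_cases hξ : ξ = 0
  · subst hξ
    simp only [sincpow, pow_one, if_pos rfl]
    norm_num
    have haC : (a : ℂ) ≠ 0 := by exact_mod_cast ha.ne'
    field_simp
    ring
  · have hr : (-2 * π * ξ : ℝ) ≠ 0 := by
      simp [mul_eq_zero, Real.pi_ne_zero, hξ]
    have hc : (↑(-2 * π * ξ) * Complex.I : ℂ) ≠ 0 :=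
      mul_ne_zero (Complex.ofReal_ne_zero.mpr hr) Complex.I_ne_zero
    rw [integral_exp_mul_complex hc]
    simp only [sincpow, pow_one, if_neg hξ]
    have hθ : (a * (2 * π * ξ) : ℝ) ≠ 0 := by
      intro h
      rcases mul_eq_zero.1 h with h | h
      · exact ha.ne' h
      · rcases mul_eq_zero.1 h with h | h
        · simpa [Real.pi_ne_zero] using h
        · exact hξ h
    have hθC : ((a * (2 * π * ξ) : ℝ) : ℂ) ≠ 0 := Complex.ofReal_ne_zero.mpr hθ
    have e1 : (↑(-2 * π * ξ) * Complex.I : ℂ) * ↑a = -↑(a * (2 * π * ξ)) * Complex.I := by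
      push_cast; ring
    have e2 : (↑(-2 * π * ξ) * Complex.I : ℂ) * ↑(-a : ℝ) = ↑(a * (2 * π * ξ)) * Complex.I := by
      push_cast; ring
    rw [e1, e2, Complex.ofReal_div, Complex.ofReal_sin, Complex.sin]
    have haC : (a : ℂ) ≠ 0 := by exact_mod_cast ha.ne'
    field_simp
    ring_nf
    simp [Complex.I_sq]
    ring

noncomputable def iterConv (a : ℝ) : ℕ → ℝ → ℂ
  | 0 => box a
  | n + 1 => box a ⋆[mulCC] iterConv a n

lemma iterConv_integrable {a : ℝ} (ha : 0 < a) (n : ℕ) : Integrable (iterConv a n) := by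
  induction n with
  | zero => exact box_integrable ha
  | succ n ih => exact (box_integrable ha).integrable_convolution mulCC ih

lemma iterConv_support {a : ℝ} (ha : 0 < a) (n : ℕ) :
    Function.support (iterConv a n) ⊆ Set.Icc (-((n + 1 : ℕ) * a)) ((n + 1 : ℕ) * a) := by
  induction n with
  | zero => simpa [iterConv] using box_support
  | succ n ih =>
    have h0 : Function.support (box a ⋆[mulCC] iterConv a n) ⊆
        Function.support (box a) + Function.support (iterConv a n) :=
      support_convolution_subset mulCC
    refine h0.trans ?_
    refine (Set.add_subset_add box_support ih).trans ?_
    refine (Set.Icc_add_Icc_subset _ _ _ _).trans ?_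
    have h1 : -a + -((n + 1 : ℕ) * a) = -((n + 1 + 1 : ℕ) * a) := by push_cast; ring
    have h2 : a + (n + 1 : ℕ) * a = ((n + 1 + 1 : ℕ) * a) := by push_cast; ring
    rw [h1, h2]

lemma iterConv_fourier {a : ℝ} (ha : 0 < a) (n : ℕ) :
    𝓕 (iterConv a n) = sincpow a (n + 1) := by
  induction n with
  | zero => exact funext fun ξ => fourier_box ha ξ
  | succ n ih =>
    funext ξ
    rw [show iterConv a (n + 1) = box a ⋆[mulCC] iterConv a n from rfl,
      fourier_conv (box_integrable ha) (iterConv_integrable ha n), ih, fourier_box ha,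
      sincpow, sincpow, sincpow, pow_one, ← pow_succ']

lemma sincpow_integrable {a : ℝ} (ha : 0 < a) {n : ℕ} (hn : 2 ≤ n) :
    Integrable (sincpow a n) := by
  set B : ℝ → ℂ := fun ξ =>
    if ξ = 0 then (1 : ℂ) else ((Real.sin (a * (2 * π * ξ)) / (a * (2 * π * ξ)) : ℝ) : ℂ) with hB
  have hBmeas : Measurable B := by
    apply Measurable.ite (MeasurableSet.singleton 0) measurable_const
    fun_prop
  have hB1 : ∀ ξ, ‖B ξ‖ ≤ 1 := by
    intro ξ
    by_cases hξ : ξ = 0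
    · simp [hB, hξ]
    · simp only [hB, if_neg hξ, Complex.norm_real, Real.norm_eq_abs, abs_div]
      rcases eq_or_ne (a * (2 * π * ξ)) 0 with h | h
      · simp [h]
      · rw [div_le_one (abs_pos.2 h)]
        exact Real.abs_sin_le_abs
  have hB2 : ∀ ξ : ℝ, ‖B ξ‖ * |ξ| ≤ (2 * π * a)⁻¹ := by
    intro ξ
    by_cases hξ : ξ = 0
    · simp [hξ]
      positivity
    · simp only [hB, if_neg hξ, Complex.norm_real, Real.norm_eq_abs, abs_div]
      rw [div_mul_eq_mul_div, div_le_iff₀ (by positivity : (0:ℝ) < |a * (2 * π * ξ)|)]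
      have h1 : |Real.sin (a * (2 * π * ξ))| ≤ 1 := Real.abs_sin_le_one _
      have h2 : |a * (2 * π * ξ)| = 2 * π * a * |ξ| := by
        rw [abs_mul, abs_mul, abs_of_pos ha, abs_of_pos Real.two_pi_pos]
        ring
      have h3 : (2 * π * a)⁻¹ * (2 * π * a * |ξ|) = |ξ| := by
        field_simp
      rw [h2, h3]
      exact mul_le_of_le_one_left (abs_nonneg ξ) h1
  have hbound : ∀ ξ : ℝ, ‖sincpow a n ξ‖ ≤ (1 + ((2 * π * a)⁻¹) ^ 2) * (1 + ξ ^ 2)⁻¹ := by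
    intro ξ
    have hfn : ‖sincpow a n ξ‖ = ‖B ξ‖ ^ n := norm_pow _ _
    have h2 : ‖B ξ‖ ^ n ≤ ‖B ξ‖ ^ 2 := pow_le_pow_of_le_one (norm_nonneg _) (hB1 ξ) hn
    have key : ‖B ξ‖ ^ 2 * (1 + ξ ^ 2) ≤ 1 + ((2 * π * a)⁻¹) ^ 2 := by
      have a1 : ‖B ξ‖ ^ 2 ≤ 1 := by nlinarith [hB1 ξ, norm_nonneg (B ξ)]
      have a2 : ‖B ξ‖ ^ 2 * ξ ^ 2 ≤ ((2 * π * a)⁻¹) ^ 2 := by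
        have h := hB2 ξ
        have h' := mul_le_mul h h (by positivity) (by positivity)
        calc ‖B ξ‖ ^ 2 * ξ ^ 2 = (‖B ξ‖ * |ξ|) * (‖B ξ‖ * |ξ|) := by
              rw [← _root_.sq_abs ξ]; ring
          _ ≤ (2 * π * a)⁻¹ * (2 * π * a)⁻¹ := h'
          _ = ((2 * π * a)⁻¹) ^ 2 := (sq _).symm
      nlinarith
    have hpos : (0:ℝ) < 1 + ξ ^ 2 := by positivity
    rw [hfn]
    refine h2.trans ?_
    have := (le_div_iff₀ hpos).mpr key
    rwa [div_eq_mul_inv] at this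
  refine (integrable_inv_one_add_sq.const_mul (1 + ((2 * π * a)⁻¹) ^ 2)).mono'
    ?_ (Filter.Eventually.of_forall hbound)
  exact ((hBmeas.pow_const n).aestronglyMeasurable)

/-- For every real `a > 0`, every integer `N ≥ 2`, and every real `z` with `|z| > N·a`,
the Fourier-inversion integral `∫ (sin(aω)/(aω))^N e^{-iωz} dω` vanishes (the sinc factor
being extended by the value `1` at `ω = 0`). -/
theorem stmt_0 (a : ℝ) (ha : 0 < a) (N : ℕ) (hN : 2 ≤ N) (z : ℝ)
    (hz : (N : ℝ) * a < |z|) :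
    ∫ ω : ℝ,
      (if ω = 0 then (1 : ℂ) else ((Real.sin (a * ω) / (a * ω) : ℝ) : ℂ)) ^ N *
        Complex.exp (-Complex.I * ω * z) = 0 := by
  obtain ⟨n, rfl⟩ : ∃ n, n + 1 = N := ⟨N - 1, by omega⟩
  set Φ : ℝ → ℂ := fun ω =>
    (if ω = 0 then (1 : ℂ) else ((Real.sin (a * ω) / (a * ω) : ℝ) : ℂ)) ^ (n + 1) *
      Complex.exp (-Complex.I * ω * z) with hΦ
  have hfour : 𝓕 (iterConv a n) = sincpow a (n + 1) := iterConv_fourier ha n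
  have hfour_int : Integrable (𝓕 (iterConv a n)) := by
    rw [hfour]; exact sincpow_integrable ha hN
  have hne : ∀ x : ℝ, ((n : ℝ) + 1) * a < |x| → iterConv a n x = 0 := by
    intro x hx
    by_contra h
    have hmem := iterConv_support ha n (Function.mem_support.2 h)
    rw [Set.mem_Icc] at hmem
    have : |x| ≤ ((n : ℝ) + 1) * a := by
      rw [abs_le]
      constructor
      · have := hmem.1; push_cast at this ⊢; linarith
      · have := hmem.2; push_cast at this ⊢; linarith
    linarith
  have hzz : ((n : ℝ) + 1) * a < |(-z)| := by
    rw [abs_neg]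
    push_cast at hz
    linarith
  have hcontAt : ContinuousAt (iterConv a n) (-z) := by
    have hU : IsOpen {x : ℝ | ((n : ℝ) + 1) * a < |x|} :=
      isOpen_lt continuous_const continuous_abs
    have hev : ∀ᶠ x in nhds (-z), iterConv a n x = 0 := by
      filter_upwards [hU.mem_nhds hzz] with x hx using hne x hx
    exact (Filter.EventuallyEq.continuousAt (by filter_upwards [hev] with x hx using hx))
  have hinv : 𝓕⁻ (𝓕 (iterConv a n)) (-z) = 0 := by
    rw [(iterConv_integrable ha n).fourierInv_fourier_eq hfour_int hcontAt]
    exact hne _ hzz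
  have hfz : 𝓕 (sincpow a (n + 1)) z = 0 := by
    rw [← hfour, ← neg_neg z, ← Real.fourierInv_eq_fourier_neg]
    exact hinv
  have key : ∫ ξ : ℝ, Φ (2 * π * ξ) = 0 := by
    rw [← hfz, Real.fourier_real_eq_integral_exp_smul]
    congr 1 with ξ
    have hiff : (2 * π * ξ = 0) ↔ (ξ = 0) := by
      constructor
      · intro h
        rcases mul_eq_zero.1 h with h | h
        · simpa [Real.pi_ne_zero] using h
        · exact h
      · intro h; rw [h]; ring
    have hexp : (-Complex.I * (2 * π * ξ : ℝ) * z : ℂ) = ↑(-2 * π * ξ * z) * Complex.I := by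
      push_cast; ring
    rw [hΦ]
    simp only [sincpow, smul_eq_mul, hiff, hexp]
    ring
  have hcv := MeasureTheory.Measure.integral_comp_mul_left Φ (2 * π)
  rw [key] at hcv
  have h2π : |(2 * π)⁻¹| ≠ 0 := by
    simp [Real.pi_ne_zero]
  have := (smul_eq_zero.1 hcv.symm).resolve_left h2π
  exact this
end

section
/- For every real number ω, the integral ∫_{-∞}^{∞} e^{iωx} / (π(1 + x²)) dx equals e^{-|ω|}; that is, the characteristic function of the standard Cauchy distribution is ω ↦ e^{-|ω|}. -/
open MeasureTheory Real Complex Set Filter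
open scoped FourierTransform Topology

section CauchyAux

lemma int_cexp (c : ℂ) (hc : c.re < 0) :
    ∫ x : ℝ in Ioi (0:ℝ), Complex.exp (c * x) = -c⁻¹ := by
  have hc0 : c ≠ 0 := fun h => by simp [h] at hc
  have hint : IntegrableOn (fun x : ℝ => Complex.exp (c * x)) (Ioi (0:ℝ)) := by
    refine (Integrable.mono' (g := fun x : ℝ => Real.exp (-(-c.re) * x))
      ((exp_neg_integrableOn_Ioi 0 (by linarith)))
      ?_ ?_)
    · exact (Complex.continuous_exp.comp (continuous_const.mul Complex.continuous_ofReal)).aestronglyMeasurable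
    · filter_upwards with x
      simp [Complex.norm_exp, neg_neg, mul_comm]
  have hderiv : ∀ x ∈ Ici (0:ℝ), HasDerivAt (fun x : ℝ => Complex.exp (c * x) / c)
      (Complex.exp (c * x)) x := by
    intro x _
    have h1 : HasDerivAt (fun x : ℝ => c * (x : ℂ)) c x := by
      simpa using (HasDerivAt.ofReal_comp (hasDerivAt_id x)).const_mul c
    have := (h1.cexp).div_const c
    simpa [mul_div_cancel_right₀ _ hc0] using this
  have htend : Tendsto (fun x : ℝ => Complex.exp (c * x) / c) atTop (𝓝 0) := by
    rw [tendsto_zero_iff_norm_tendsto_zero]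
    have : Tendsto (fun x : ℝ => Real.exp (c.re * x) / ‖c‖) atTop (𝓝 0) := by
      have h1 : Tendsto (fun x : ℝ => c.re * x) atTop atBot :=
        tendsto_id.const_mul_atTop_of_neg hc
      simpa using (Real.tendsto_exp_atBot.comp h1).div_const ‖c‖
    refine this.congr fun x => ?_
    simp [Complex.norm_exp, mul_comm]
  have := integral_Ioi_of_hasDerivAt_of_tendsto' hderiv hint htend
  simpa [neg_div, div_eq_mul_inv] using this

noncomputable def g : ℝ → ℂ := fun x => (Real.exp (-|x|) : ℂ)

lemma g_cont : Continuous g :=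
  Complex.continuous_ofReal.comp (Real.continuous_exp.comp (_root_.continuous_abs).neg)

lemma g_integrable : Integrable g := by
  have h1 : IntegrableOn g (Ioi (0:ℝ)) := by
    refine Integrable.mono' (g := fun x : ℝ => Real.exp (-(1:ℝ) * x))
      (exp_neg_integrableOn_Ioi 0 one_pos) ?_ ?_
    · exact (Complex.continuous_ofReal.comp (Real.continuous_exp.comp (_root_.continuous_abs).neg)).aestronglyMeasurable
    · filter_upwards [ae_restrict_mem measurableSet_Ioi] with x hx
      simp [g, Complex.norm_exp, abs_of_pos (mem_Ioi.1 hx)]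
  have h2 : IntegrableOn g (Iic (0:ℝ)) := by
    refine Integrable.mono' (g := Real.exp) (integrableOn_exp_Iic 0) ?_ ?_
    · exact (Complex.continuous_ofReal.comp (Real.continuous_exp.comp (_root_.continuous_abs).neg)).aestronglyMeasurable
    · filter_upwards [ae_restrict_mem measurableSet_Iic] with x hx
      simp [g, Complex.norm_exp, abs_of_nonpos (mem_Iic.1 hx)]
  have := h2.union h1
  rwa [Iic_union_Ioi, integrableOn_univ] at this

lemma fourier_g (t : ℝ) : 𝓕 g t = (2 : ℂ) / (1 + (2 * π * t : ℝ) ^ 2) := by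
  have key : ∀ t : ℝ, 𝓕 g t = ∫ x : ℝ, Complex.exp ((-2 * π * (x * t) : ℝ) * Complex.I) * g x := by
    intro t
    rw [Real.fourier_eq']
    simp [RCLike.inner_apply, smul_eq_mul]
    congr 1; ext x; ring_nf
  have hint : Integrable (fun x : ℝ => Complex.exp ((-2 * π * (x * t) : ℝ) * Complex.I) * g x) := by
    refine Integrable.mono' (g := fun x => ‖g x‖) g_integrable.norm ?_ ?_
    · exact ((Complex.continuous_exp.comp (by continuity)).mul g_cont).aestronglyMeasurable
    · filter_upwards with x
      rw [norm_mul]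
      simp [Complex.norm_exp]
  rw [key]
  have c1 : ((-1 : ℂ) - (2 * π * t) * Complex.I).re < 0 := by simp
  have c2 : ((-1 : ℂ) + (2 * π * t) * Complex.I).re < 0 := by simp
  have hIoi : ∫ x : ℝ in Ioi (0:ℝ), Complex.exp ((-2 * π * (x * t) : ℝ) * Complex.I) * g x
      = -((-1 : ℂ) - (2 * π * t) * Complex.I)⁻¹ := by
    rw [← int_cexp _ c1]
    refine setIntegral_congr_fun measurableSet_Ioi fun x hx => ?_
    have hx0 : (0:ℝ) < x := hx
    simp only [g, abs_of_pos hx0]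
    rw [show ((Real.exp (-x) : ℝ) : ℂ) = Complex.exp ((-x : ℝ) : ℂ) by
      rw [Complex.ofReal_exp], ← Complex.exp_add]
    congr 1
    push_cast
    ring
  have hIic : ∫ x : ℝ in Iic (0:ℝ), Complex.exp ((-2 * π * (x * t) : ℝ) * Complex.I) * g x
      = -((-1 : ℂ) + (2 * π * t) * Complex.I)⁻¹ := by
    rw [show (0:ℝ) = -0 by ring, ← integral_comp_neg_Ioi, ← int_cexp _ c2]
    refine setIntegral_congr_fun measurableSet_Ioi fun x hx => ?_
    have hx0 : (0:ℝ) < x := hx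
    simp only [g, abs_neg, abs_of_pos hx0]
    rw [show ((Real.exp (-x) : ℝ) : ℂ) = Complex.exp ((-x : ℝ) : ℂ) by
      rw [Complex.ofReal_exp], ← Complex.exp_add]
    congr 1
    push_cast
    ring
  rw [← intervalIntegral.integral_Iic_add_Ioi hint.integrableOn hint.integrableOn, hIoi, hIic]
  have h1 : (1 : ℂ) + (2 * π * t) * Complex.I ≠ 0 := by
    intro h
    have := congrArg Complex.re h
    simp at this
  have h2 : (1 : ℂ) - (2 * π * t) * Complex.I ≠ 0 := by
    intro h
    have := congrArg Complex.re h
    simp at this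
  have h3 : (1 : ℂ) + ((2 * π * t : ℝ) : ℂ) ^ 2 ≠ 0 := by
    rw [show ((1:ℂ) + ((2 * π * t : ℝ) : ℂ)^2) = ((1 + (2*π*t)^2 : ℝ) : ℂ) by push_cast; ring]
    exact_mod_cast ne_of_gt (by positivity : (0:ℝ) < 1 + (2*π*t)^2)
  rw [show -((-1 : ℂ) + (2 * π * t) * Complex.I)⁻¹ = ((1 : ℂ) - (2 * π * t) * Complex.I)⁻¹ by
    rw [← inv_neg]; ring_nf,
    show -((-1 : ℂ) - (2 * π * t) * Complex.I)⁻¹ = ((1 : ℂ) + (2 * π * t) * Complex.I)⁻¹ by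
    rw [← inv_neg]; ring_nf]
  field_simp
  ring_nf
  simp only [Complex.I_sq]
  ring_nf
  have h4 : (1 + (π:ℂ)^2*(t:ℂ)^2*4) ≠ 0 := by
    rw [show (1 + (π:ℂ)^2*(t:ℂ)^2*4) = ((1 + π^2*t^2*4 : ℝ) : ℂ) by push_cast; ring]
    exact_mod_cast ne_of_gt (by positivity : (0:ℝ) < 1 + π^2*t^2*4)
  field_simp
  push_cast
  ring

lemma Fg_integrable : Integrable (𝓕 g) := by
  rw [funext fourier_g]
  refine Integrable.mono' (g := fun t : ℝ => 2 * (1 + t^2)⁻¹)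
    (integrable_inv_one_add_sq.const_mul 2) ?_ ?_
  · apply Continuous.aestronglyMeasurable
    apply Continuous.div continuous_const
    · continuity
    · intro t
      rw [show ((1:ℂ) + ((2 * π * t : ℝ) : ℂ)^2) = ((1 + (2*π*t)^2 : ℝ) : ℂ) by push_cast; ring]
      exact_mod_cast ne_of_gt (by positivity : (0:ℝ) < 1 + (2*π*t)^2)
  · filter_upwards with t
    rw [show ((2:ℂ) / (1 + ((2 * π * t : ℝ) : ℂ)^2)) = ((2 / (1 + (2*π*t)^2) : ℝ) : ℂ) by
      push_cast; ring]
    rw [Complex.norm_real, Real.norm_eq_abs, abs_of_pos (by positivity)]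
    rw [show (2:ℝ) * (1 + t^2)⁻¹ = 2 / (1 + t^2) by ring]
    apply div_le_div_of_nonneg_left (by norm_num) (by positivity)
    have hh : 0 ≤ t^2*(4*π^2-1) := mul_nonneg (sq_nonneg t) (by nlinarith [Real.pi_gt_three])
    nlinarith [hh]

end CauchyAux

/-- The characteristic function of the standard Cauchy distribution:
`∫ e^{iωx} / (π(1 + x²)) dx = e^{-|ω|}` for every real `ω`. -/
theorem stmt_3 (ω : ℝ) :
    ∫ x : ℝ, Complex.exp (Complex.I * ω * x) / (π * (1 + (x : ℂ) ^ 2))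
      = (Real.exp (-|ω|) : ℂ) := by
  have hinv := g_integrable.fourierInv_fourier_eq Fg_integrable g_cont.continuousAt (v := ω)
  have hπ : (0:ℝ) < 2 * π := by positivity
  set F : ℝ → ℂ := fun x => Complex.exp (Complex.I * ω * x) / (π * (1 + (x : ℂ) ^ 2)) with hF
  have key : 𝓕⁻ (𝓕 g) ω = ∫ v : ℝ, (2 * π) • F (2 * π * v) := by
    rw [Real.fourierInv_eq']
    refine MeasureTheory.integral_congr_ae (Filter.Eventually.of_forall fun v => ?_)
    simp only [RCLike.inner_apply, starRingEnd_apply, star_trivial, Circle.smul_def,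
      smul_eq_mul, hF]
    rw [fourier_g v]
    rw [show ((2 * π * v : ℝ) : ℂ) = 2 * ↑π * ↑v by push_cast; ring]
    have hd : (↑π * (1 + ((2 * π * v : ℝ) : ℂ) ^ 2)) ≠ 0 := by
      rw [show (↑π * (1 + ((2 * π * v : ℝ) : ℂ)^2)) = ((π * (1 + (2*π*v)^2) : ℝ) : ℂ) by
        push_cast; ring]
      exact_mod_cast ne_of_gt (by positivity : (0:ℝ) < π * (1 + (2*π*v)^2))
    rw [Complex.real_smul]
    push_cast
    rw [show Complex.I * ↑ω * (2 * ↑π * ↑v) = ↑(2 * π * (v * ω)) * Complex.I by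
      push_cast; ring]
    have hπc : (π:ℂ) ≠ 0 := Complex.ofReal_ne_zero.2 Real.pi_ne_zero
    have h5 : (1:ℂ) + (π:ℂ)^2*(v:ℂ)^2*4 ≠ 0 := by
      rw [show (1:ℂ) + (π:ℂ)^2*(v:ℂ)^2*4 = ((1 + π^2*v^2*4 : ℝ) : ℂ) by push_cast; ring]
      exact_mod_cast ne_of_gt (by positivity : (0:ℝ) < 1 + π^2*v^2*4)
    field_simp
    ring_nf
    push_cast
    ring_nf
  rw [key] at hinv
  rw [integral_smul, MeasureTheory.Measure.integral_comp_mul_left F (2*π)] at hinv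
  rw [abs_of_pos (by positivity : (0:ℝ) < (2*π)⁻¹), smul_smul,
    mul_inv_cancel₀ (ne_of_gt hπ), one_smul] at hinv
  rw [hinv]
  simp [g]
end

section
/- For every real number ω, the integral ∫_{-∞}^{∞} e^{iωx} / cosh(x) dx equals π / cosh(πω/2). Consequently the characteristic function of the probability density x ↦ 1/(π·cosh x) is ω ↦ 1/cosh(πω/2). -/
open MeasureTheory Real Complex

noncomputable def sechPhi (x : ℝ) : ℝ := Real.exp (2*x) / (1 + Real.exp (2*x))

lemma sechPhi_mem (x : ℝ) : sechPhi x ∈ Set.Ioo (0:ℝ) 1 := by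
  have h : (0:ℝ) < Real.exp (2*x) := Real.exp_pos _
  unfold sechPhi
  constructor
  · positivity
  · rw [div_lt_one (by linarith)]; linarith

lemma sechPhi_deriv (x : ℝ) :
    HasDerivAt sechPhi (2 * Real.exp (2*x) / (1 + Real.exp (2*x))^2) x := by
  have h : (0:ℝ) < Real.exp (2*x) := Real.exp_pos _
  have h1 : HasDerivAt (fun x : ℝ => Real.exp (2*x)) (2 * Real.exp (2*x)) x := by
    have h0 : HasDerivAt (fun x : ℝ => 2*x) 2 x := by
      simpa using (hasDerivAt_id x).const_mul 2
    simpa [mul_comm] using h0.exp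
  have h2 : HasDerivAt (fun x : ℝ => 1 + Real.exp (2*x)) (2 * Real.exp (2*x)) x :=
    (h1.const_add 1)
  have := h1.div h2 (by positivity)
  exact this.congr_deriv (by ring)

lemma sechPhi_strictMono : StrictMono sechPhi := by
  intro a b hab
  have ha : (0:ℝ) < Real.exp (2*a) := Real.exp_pos _
  have hb : (0:ℝ) < Real.exp (2*b) := Real.exp_pos _
  have h : Real.exp (2*a) < Real.exp (2*b) := Real.exp_lt_exp.2 (by linarith)
  unfold sechPhi
  rw [div_lt_div_iff₀ (by linarith) (by linarith)]
  nlinarith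

lemma sechPhi_image : sechPhi '' Set.univ = Set.Ioo (0:ℝ) 1 := by
  apply Set.Subset.antisymm
  · rintro _ ⟨x, -, rfl⟩; exact sechPhi_mem x
  · rintro y ⟨hy0, hy1⟩
    refine ⟨(1/2) * Real.log (y / (1 - y)), Set.mem_univ _, ?_⟩
    have h1y : (0:ℝ) < 1 - y := by linarith
    have hyy : (0:ℝ) < y / (1 - y) := div_pos hy0 h1y
    unfold sechPhi
    rw [show 2 * ((1/2) * Real.log (y / (1 - y))) = Real.log (y / (1 - y)) by ring,
      Real.exp_log hyy]
    field_simp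
    ring

lemma sechPhi_key (ω x : ℝ) :
    |2 * Real.exp (2*x) / (1 + Real.exp (2*x))^2| •
      ((((sechPhi x : ℝ) : ℂ)) ^ ((1 + Complex.I * ω)/2 - 1) *
        ((1 : ℂ) - ((sechPhi x : ℝ) : ℂ)) ^ ((1 - (1 + Complex.I * ω)/2) - 1))
      = Complex.exp (Complex.I * ω * x) / (Real.cosh x : ℂ) := by
  have hE : (0:ℝ) < Real.exp (2*x) := Real.exp_pos _
  have hD : (0:ℝ) < 1 + Real.exp (2*x) := by linarith
  have ht0 : (0:ℝ) < sechPhi x := (sechPhi_mem x).1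
  have ht1 : sechPhi x < 1 := (sechPhi_mem x).2
  have h1t : (0:ℝ) < 1 - sechPhi x := by linarith
  -- rewrite cpow as exp of log
  have hc1 : (((sechPhi x : ℝ) : ℂ)) ^ ((1 + Complex.I * ω)/2 - 1)
      = Complex.exp (((Real.log (sechPhi x) : ℝ) : ℂ) * ((1 + Complex.I * ω)/2 - 1)) := by
    rw [Complex.cpow_def_of_ne_zero (by exact_mod_cast ht0.ne'),
      Complex.ofReal_log ht0.le]
  have hc2 : ((1 : ℂ) - ((sechPhi x : ℝ) : ℂ)) ^ ((1 - (1 + Complex.I * ω)/2) - 1)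
      = Complex.exp (((Real.log (1 - sechPhi x) : ℝ) : ℂ)
          * ((1 - (1 + Complex.I * ω)/2) - 1)) := by
    have : ((1 : ℂ) - ((sechPhi x : ℝ) : ℂ)) = (((1 - sechPhi x : ℝ)) : ℂ) := by push_cast; ring
    rw [this, Complex.cpow_def_of_ne_zero (by exact_mod_cast h1t.ne'),
      Complex.ofReal_log h1t.le]
  have hlog1 : Real.log (sechPhi x) = 2*x - Real.log (1 + Real.exp (2*x)) := by
    unfold sechPhi
    rw [Real.log_div hE.ne' hD.ne', Real.log_exp]
  have hlog2 : Real.log (1 - sechPhi x) = - Real.log (1 + Real.exp (2*x)) := by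
    have : 1 - sechPhi x = (1 + Real.exp (2*x))⁻¹ := by
      unfold sechPhi; field_simp; ring
    rw [this, Real.log_inv]
  rw [hc1, hc2, hlog1, hlog2, ← Complex.exp_add]
  set L : ℝ := Real.log (1 + Real.exp (2*x)) with hL
  have hexp : (((2*x - L : ℝ)) : ℂ) * ((1 + Complex.I * ω)/2 - 1)
      + ((- L : ℝ) : ℂ) * ((1 - (1 + Complex.I * ω)/2) - 1)
      = Complex.I * ω * x + (((-x : ℝ) : ℂ) + ((L : ℝ) : ℂ)) := by
    push_cast; ring
  rw [hexp, Complex.exp_add, Complex.exp_add, ← Complex.ofReal_exp, ← Complex.ofReal_exp,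
    Real.exp_log hD]
  have habs : |2 * Real.exp (2*x) / (1 + Real.exp (2*x))^2|
      = 2 * Real.exp (2*x) / (1 + Real.exp (2*x))^2 := abs_of_pos (by positivity)
  rw [habs, real_smul]
  have hcosh : (0:ℝ) < Real.cosh x := Real.cosh_pos x
  have hcne : ((Real.cosh x : ℝ) : ℂ) ≠ 0 := by exact_mod_cast hcosh.ne'
  rw [eq_div_iff hcne]
  have hreal : (2 * Real.exp (2*x) / (1 + Real.exp (2*x))^2)
      * (Real.exp (-x) * (1 + Real.exp (2*x))) * Real.cosh x = 1 := by
    rw [Real.cosh_eq]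
    have h2x : Real.exp (2*x) = Real.exp x * Real.exp x := by
      rw [← Real.exp_add]; ring_nf
    have hx : Real.exp (-x) = (Real.exp x)⁻¹ := Real.exp_neg x
    have hxpos : (0:ℝ) < Real.exp x := Real.exp_pos x
    field_simp [h2x, hx]
    simp only [h2x, Real.exp_neg]; generalize Real.exp x = E at hxpos ⊢; field_simp; ring
  calc ((2 * Real.exp (2*x) / (1 + Real.exp (2*x))^2 : ℝ) : ℂ)
        * (Complex.exp (Complex.I * ω * x)
          * (((Real.exp (-x) : ℝ) : ℂ) * (((1 + Real.exp (2*x) : ℝ)) : ℂ)))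
        * ((Real.cosh x : ℝ) : ℂ)
      = Complex.exp (Complex.I * ω * x) *
        (((2 * Real.exp (2*x) / (1 + Real.exp (2*x))^2)
          * (Real.exp (-x) * (1 + Real.exp (2*x))) * Real.cosh x : ℝ) : ℂ) := by
        push_cast; ring
    _ = Complex.exp (Complex.I * ω * x) := by rw [hreal]; simp

/-- `∫ e^{iωx}/cosh x dx = π / cosh(πω/2)`; consequently the characteristic function of
the hyperbolic-secant density `x ↦ 1/(π cosh x)` is `ω ↦ 1/cosh(πω/2)`. -/
theorem stmt_6 (ω : ℝ) :
    (∫ x : ℝ, Complex.exp (Complex.I * ω * x) / (Real.cosh x : ℂ)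
      = ((π / Real.cosh (π * ω / 2) : ℝ) : ℂ)) ∧
    (∫ x : ℝ, Complex.exp (Complex.I * ω * x) / ((π : ℂ) * (Real.cosh x : ℂ))
      = ((1 / Real.cosh (π * ω / 2) : ℝ) : ℂ)) := by
  set s : ℂ := (1 + Complex.I * ω)/2 with hs
  have hres : Real.sin = Real.sin := rfl
  have hmain : ∫ x : ℝ, Complex.exp (Complex.I * ω * x) / (Real.cosh x : ℂ)
      = ((π / Real.cosh (π * ω / 2) : ℝ) : ℂ) := by
    have hcv := MeasureTheory.integral_image_eq_integral_abs_deriv_smul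
      (MeasurableSet.univ) (f := sechPhi)
      (f' := fun x => 2 * Real.exp (2*x) / (1 + Real.exp (2*x))^2)
      (fun x _ => (sechPhi_deriv x).hasDerivWithinAt)
      (sechPhi_strictMono.injective.injOn)
      (fun t : ℝ => ((t : ℂ)) ^ (s - 1) * ((1 : ℂ) - (t : ℂ)) ^ ((1 - s) - 1))
    rw [sechPhi_image] at hcv
    have hbeta : Complex.betaIntegral s (1 - s)
        = ∫ t in Set.Ioo (0:ℝ) 1, ((t : ℂ)) ^ (s - 1) * ((1 : ℂ) - (t : ℂ)) ^ ((1 - s) - 1) := by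
      rw [Complex.betaIntegral, intervalIntegral.integral_of_le zero_le_one,
        ← MeasureTheory.integral_Ioc_eq_integral_Ioo]
    have hptw : ∀ x : ℝ, |2 * Real.exp (2*x) / (1 + Real.exp (2*x))^2| •
        (((sechPhi x : ℝ) : ℂ) ^ (s - 1) * ((1 : ℂ) - ((sechPhi x : ℝ) : ℂ)) ^ ((1 - s) - 1))
        = Complex.exp (Complex.I * ω * x) / (Real.cosh x : ℂ) := fun x => sechPhi_key ω x
    have heq : ∫ x : ℝ, Complex.exp (Complex.I * ω * x) / (Real.cosh x : ℂ)
        = Complex.betaIntegral s (1 - s) := by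
      rw [hbeta, hcv, ← MeasureTheory.setIntegral_univ]
      exact MeasureTheory.setIntegral_congr_fun MeasurableSet.univ
        (fun x _ => (hptw x).symm)
    rw [heq]
    have hs_re : 0 < s.re := by
      simp [hs, Complex.div_re, Complex.add_re, Complex.one_re, Complex.mul_re,
        Complex.I_re, Complex.I_im, Complex.ofReal_re, Complex.ofReal_im]
      try norm_num
    have hs1_re : 0 < (1 - s).re := by
      simp [hs, Complex.sub_re, Complex.div_re, Complex.add_re, Complex.one_re,
        Complex.mul_re, Complex.I_re, Complex.I_im, Complex.ofReal_re, Complex.ofReal_im]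
      try norm_num
    have hGG := Complex.Gamma_mul_Gamma_eq_betaIntegral hs_re hs1_re
    rw [show s + (1 - s) = 1 by ring, Complex.Gamma_one, one_mul] at hGG
    rw [← hGG, Complex.Gamma_mul_Gamma_one_sub]
    have hsin : Complex.sin (π * s) = ((Real.cosh (π * ω / 2) : ℝ) : ℂ) := by
      have : (π : ℂ) * s = π/2 + ((π * ω / 2 : ℝ) : ℂ) * Complex.I := by
        rw [hs]; push_cast; ring
      rw [this, Complex.sin_add, Complex.cos_mul_I, Complex.sin_mul_I]
      have hpi2 : ((π : ℂ)/2) = (((π/2 : ℝ)) : ℂ) := by push_cast; ring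
      rw [hpi2, ← Complex.ofReal_sin, ← Complex.ofReal_cos, Real.sin_pi_div_two,
        Real.cos_pi_div_two, ← Complex.ofReal_cosh]
      simp
    rw [hsin]
    push_cast
    ring
  refine ⟨hmain, ?_⟩
  have hrw : ∀ x : ℝ, Complex.exp (Complex.I * ω * x) / ((π : ℂ) * (Real.cosh x : ℂ))
      = (Complex.exp (Complex.I * ω * x) / (Real.cosh x : ℂ)) / (π : ℂ) := by
    intro x; field_simp
  rw [integral_congr_ae (Filter.Eventually.of_forall hrw), MeasureTheory.integral_div,
    hmain]
  have hcosh : Real.cosh (π * ω / 2) ≠ 0 := (Real.cosh_pos _).ne'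
  have hpi : (π : ℂ) ≠ 0 := by exact_mod_cast Real.pi_ne_zero
  have hc2 : Complex.cosh ((π:ℂ) * ω / 2) ≠ 0 := by
    have h3 : ((Real.cosh (π * ω / 2) : ℝ) : ℂ) ≠ 0 := by exact_mod_cast hcosh
    rw [Complex.ofReal_cosh] at h3
    convert h3 using 2
    push_cast; ring
  rw [div_eq_iff hpi]
  push_cast
  field_simp
end

section
/- Let N ≥ 1 be an integer and define p_N(z) = (1/(2π)) ∫_{-∞}^{∞} (cosh(ω/√N))^{−N} e^{−iωz} dω for real z (the integral converges absolutely). Then the ratio p_N(z) / [ (N^{N/2}/(N−1)!) · z^{N−1} · exp(−π z √N / 2) ] converges to 1 as z → +∞. -/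
open MeasureTheory Real Complex Filter

section Stmt12AuxSection
open Set
namespace Stmt12Proof

lemma re_val (N : ℕ) (t : ℝ) : ((((N:ℂ)) - Complex.I * t) / 2).re = N / 2 := by
  simp [Complex.div_re]

lemma cpow_exp_log {x : ℝ} (hx : 0 < x) (c : ℂ) :
    (x : ℂ) ^ c = Complex.exp (c * Real.log x) := by
  rw [Complex.cpow_def_of_ne_zero (Complex.ofReal_ne_zero.mpr hx.ne'), ← Complex.ofReal_log hx.le,
    mul_comm]

lemma integrand_eq (N : ℕ) (t u : ℝ) :
    ((Real.cosh u : ℂ)) ^ (-(N : ℤ)) * Complex.exp (-Complex.I * t * u)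
      = 2 ^ N * Complex.exp (-((N : ℂ) + Complex.I * t) * u)
        * (((1 + Real.exp (-(2 * u)) : ℝ) : ℂ)) ^ (-(N : ℤ)) := by
  have hre : Real.cosh u = Real.exp u * (1 + Real.exp (-(2 * u))) / 2 := by
    have h : Real.exp u * Real.exp (-(2 * u)) = Real.exp (-u) := by
      rw [← Real.exp_add]; ring_nf
    rw [Real.cosh_eq]
    linear_combination (-(1/2 : ℝ)) * h
  have hcosh : (Real.cosh u : ℂ)
      = Complex.exp u * (((1 + Real.exp (-(2 * u)) : ℝ) : ℂ)) / 2 := by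
    rw [hre]; push_cast [Complex.ofReal_exp]; ring
  have hy : (((1 + Real.exp (-(2 * u)) : ℝ) : ℂ)) ≠ 0 :=
    Complex.ofReal_ne_zero.mpr (by positivity)
  have hx : Complex.exp (u : ℂ) ≠ 0 := Complex.exp_ne_zero _
  have hexp : Complex.exp (-((N : ℂ) + Complex.I * t) * u)
      = (Complex.exp ((u : ℂ)) ^ N)⁻¹ * Complex.exp (-Complex.I * t * u) := by
    rw [← Complex.exp_nat_mul, ← Complex.exp_neg, ← Complex.exp_add]
    congr 1; ring
  rw [hcosh, hexp, zpow_neg, zpow_neg, zpow_natCast, zpow_natCast, div_pow, mul_pow]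
  have h2 : ((2 : ℂ)) ^ N ≠ 0 := pow_ne_zero _ two_ne_zero
  field_simp

noncomputable def ff (s : ℝ) : ℝ := (Real.log s - Real.log (1 - s)) / 2

lemma ff_inj : InjOn ff (Ioo 0 1) := by
  have : StrictMonoOn ff (Ioo 0 1) := by
    intro x hx y hy hxy
    have h1 : Real.log x < Real.log y := Real.log_lt_log hx.1 hxy
    have h2 : Real.log (1 - y) < Real.log (1 - x) :=
      Real.log_lt_log (by linarith [hy.2]) (by linarith)
    unfold ff; linarith
  exact this.injOn

lemma ff_deriv {s : ℝ} (hs : s ∈ Ioo (0:ℝ) 1) :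
    HasDerivWithinAt ff ((s⁻¹ + (1 - s)⁻¹) / 2) (Ioo 0 1) s := by
  have h1 : HasDerivAt Real.log s⁻¹ s := Real.hasDerivAt_log hs.1.ne'
  have hin : HasDerivAt (fun x : ℝ => 1 - x) (-1) s := (hasDerivAt_id s).const_sub 1
  have h2 : HasDerivAt (fun x : ℝ => Real.log (1 - x)) ((1 - s)⁻¹ * (-1)) s :=
    (Real.hasDerivAt_log (by linarith [hs.2] : (1:ℝ) - s ≠ 0)).comp s hin
  have h3 := (h1.sub h2).div_const 2
  have : (s⁻¹ - (1 - s)⁻¹ * (-1)) / 2 = (s⁻¹ + (1 - s)⁻¹) / 2 := by ring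
  rw [this] at h3
  exact h3.hasDerivWithinAt

lemma ff_image : ff '' (Ioo 0 1) = Set.univ := by
  ext u
  simp only [Set.mem_image, Set.mem_univ, iff_true]
  set E := Real.exp (2 * u) with hE
  have hEpos : 0 < E := Real.exp_pos _
  refine ⟨E / (1 + E), ⟨by positivity, ?_⟩, ?_⟩
  · rw [div_lt_one (by positivity)]; linarith
  · have h1s : 1 - E / (1 + E) = 1 / (1 + E) := by field_simp; ring
    unfold ff
    rw [h1s, Real.log_div hEpos.ne' (by positivity), Real.log_div one_ne_zero (by positivity),
      Real.log_one, hE, Real.log_exp]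
    ring

lemma integral_eq_beta (N : ℕ) (hN : 1 ≤ N) (t : ℝ) :
    (∫ u : ℝ, ((Real.cosh u : ℂ)) ^ (-(N : ℤ)) * Complex.exp (-Complex.I * t * u))
      = 2 ^ (N - 1) * Complex.betaIntegral (((N : ℂ) - Complex.I * t) / 2)
          (((N : ℂ) + Complex.I * t) / 2) := by
  set a : ℂ := ((N : ℂ) - Complex.I * t) / 2 with ha
  set b : ℂ := ((N : ℂ) + Complex.I * t) / 2 with hb
  set g : ℝ → ℂ :=
    fun u => ((Real.cosh u : ℂ)) ^ (-(N : ℤ)) * Complex.exp (-Complex.I * t * u) with hg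
  have step1 : (∫ u : ℝ, g u) = ∫ s in Ioo (0:ℝ) 1, |(s⁻¹ + (1 - s)⁻¹) / 2| • g (ff s) := by
    rw [← MeasureTheory.setIntegral_univ, ← ff_image]
    exact integral_image_eq_integral_abs_deriv_smul measurableSet_Ioo
      (fun s hs => ff_deriv hs) ff_inj g
  have step2 : Set.EqOn (fun s => |(s⁻¹ + (1 - s)⁻¹) / 2| • g (ff s))
      (fun s => (2:ℂ) ^ (N-1) * ((s:ℂ) ^ (a - 1) * ((1 : ℂ) - s) ^ (b - 1))) (Ioo (0:ℝ) 1) := by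
    intro s hs
    obtain ⟨hs0, hs1⟩ := hs
    simp only
    have h2u : Real.exp (-(2 * ff s)) = (1 - s)/s := by
      unfold ff
      rw [show -(2 * ((Real.log s - Real.log (1-s))/2)) = Real.log (1-s) - Real.log s by ring,
        Real.exp_sub, Real.exp_log hs0, Real.exp_log (by linarith)]
    have h1p : (1 : ℝ) + (1 - s)/s = s⁻¹ := by field_simp; ring
    have hsne : (s:ℂ) ≠ 0 := Complex.ofReal_ne_zero.mpr hs0.ne'
    have h1sne : (1:ℂ) - s ≠ 0 := by
      rw [show (1:ℂ) - s = ((1-s:ℝ):ℂ) by push_cast; ring]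
      exact Complex.ofReal_ne_zero.mpr (by linarith)
    have hsplit : -((N:ℂ) + Complex.I*t) * ((ff s : ℝ) : ℂ)
        = (-b) * ((Real.log s : ℝ) : ℂ) + b * ((Real.log (1-s) : ℝ) : ℂ) := by
      unfold ff; rw [hb]; push_cast; ring
    have hofr : ((1-s:ℝ):ℂ) = 1 - (s:ℂ) := by push_cast; ring
    rw [hg]
    simp only
    rw [integrand_eq, h2u, h1p, hsplit, Complex.exp_add, ← cpow_exp_log hs0,
      ← cpow_exp_log (by linarith : (0:ℝ) < 1 - s), hofr,
      Complex.ofReal_inv, zpow_neg, inv_zpow, inv_inv, zpow_natCast]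
    have hpos : 0 < (s⁻¹ + (1-s)⁻¹)/2 := by
      have i1 := inv_pos.mpr hs0
      have i2 := inv_pos.mpr (show (0:ℝ) < 1 - s by linarith)
      linarith
    rw [abs_of_pos hpos, Complex.real_smul]
    have hcast : (((s⁻¹ + (1-s)⁻¹)/2 : ℝ) : ℂ) = ((s:ℂ)⁻¹ + (1 - (s:ℂ))⁻¹)/2 := by push_cast; ring
    rw [hcast]
    have hinv : ((s:ℂ)⁻¹ + (1-(s:ℂ))⁻¹) = (s:ℂ)⁻¹ * (1-(s:ℂ))⁻¹ := by
      field_simp; ring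
    have es : ((s:ℂ) ^ (N:ℕ)) * ((s:ℂ) ^ (-b)) * ((s:ℂ))⁻¹ = (s:ℂ) ^ (a-1) := by
      rw [← Complex.cpow_natCast, ← Complex.cpow_neg_one, ← Complex.cpow_add _ _ hsne,
        ← Complex.cpow_add _ _ hsne]
      congr 1
      rw [ha, hb]; push_cast; ring
    have e1s : ((1-(s:ℂ)) ^ b) * (1-(s:ℂ))⁻¹ = (1-(s:ℂ)) ^ (b-1) := by
      rw [← Complex.cpow_neg_one, ← Complex.cpow_add _ _ h1sne, show b + -1 = b - 1 from by ring]
    have h2pow : (2:ℂ)^N = 2 * 2^(N-1) := by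
      conv_lhs => rw [show N = (N-1)+1 by omega]
      rw [pow_succ]; ring
    rw [hinv, h2pow, ← es, ← e1s]
    ring
  rw [step1, MeasureTheory.setIntegral_congr_fun measurableSet_Ioo step2,
    MeasureTheory.integral_const_mul, Complex.betaIntegral,
    intervalIntegral.integral_of_le zero_le_one, MeasureTheory.integral_Ioc_eq_integral_Ioo]



noncomputable def G (N : ℕ) (t : ℝ) : ℂ :=
  Complex.Gamma ((N - Complex.I * t) / 2) * Complex.Gamma ((N + Complex.I * t) / 2)

noncomputable def H (N : ℕ) (t : ℝ) : ℝ :=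
  2 * π * (t / 2) ^ (N - 1) * Real.exp (-(π * t / 2))

lemma G_one (t : ℝ) : G 1 t = ((π / Real.cosh (π * t / 2) : ℝ) : ℂ) := by
  have h1 : ((1 : ℕ) + Complex.I * t) / 2 = 1 - ((1 : ℕ) - Complex.I * t) / 2 := by
    push_cast; ring
  rw [G, h1, Complex.Gamma_mul_Gamma_one_sub]
  have h2 : (π : ℂ) * (((1 : ℕ) - Complex.I * t) / 2) = π / 2 - ((π * t / 2 : ℝ) : ℂ) * Complex.I := by
    push_cast; ring
  rw [h2, Complex.sin_pi_div_two_sub, Complex.cos_mul_I, ← Complex.ofReal_cosh,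
    Complex.ofReal_div]

lemma G_two {t : ℝ} (ht : 0 < t) : G 2 t = ((π * t / 2 / Real.sinh (π * t / 2) : ℝ) : ℂ) := by
  have hz : (Complex.I * t / 2 : ℂ) ≠ 0 := by
    simp [Complex.I_ne_zero, ht.ne', Complex.ext_iff]
  have h1 : ((2 : ℕ) + Complex.I * t) / 2 = Complex.I * t / 2 + 1 := by push_cast; ring
  have h2 : ((2 : ℕ) - Complex.I * t) / 2 = 1 - Complex.I * t / 2 := by push_cast; ring
  have hrefl := Complex.Gamma_mul_Gamma_one_sub (Complex.I * t / 2)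
  have h3 : (π : ℂ) * (Complex.I * t / 2) = ((π * t / 2 : ℝ) : ℂ) * Complex.I := by
    push_cast; ring
  rw [h3, Complex.sin_mul_I, ← Complex.ofReal_sinh] at hrefl
  rw [G, h1, h2, Complex.Gamma_add_one _ hz]
  have hcomm : Complex.Gamma (1 - Complex.I * t / 2) *
      (Complex.I * t / 2 * Complex.Gamma (Complex.I * t / 2)) =
      Complex.I * t / 2 *
        (Complex.Gamma (Complex.I * t / 2) * Complex.Gamma (1 - Complex.I * t / 2)) := by ring
  rw [hcomm, hrefl]
  have hs : (Real.sinh (π * t / 2) : ℂ) ≠ 0 :=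
    Complex.ofReal_ne_zero.mpr (Real.sinh_pos_iff.mpr (by positivity : (0:ℝ) < π * t / 2)).ne'
  have hs' : Complex.sinh ((π : ℂ) * t / 2) ≠ 0 := by
    rw [show ((π : ℂ) * t / 2) = ((π * t / 2 : ℝ) : ℂ) by push_cast; ring, ← Complex.ofReal_sinh]
    exact hs
  have hI := Complex.I_ne_zero
  push_cast
  field_simp

lemma G_rec (n : ℕ) (t : ℝ) (hn : 1 ≤ n) :
    G (n + 2) t = ((((n : ℝ) ^ 2 + t ^ 2) / 4 : ℝ) : ℂ) * G n t := by
  have h1 : ((n : ℂ) - Complex.I * t) / 2 ≠ 0 := by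
    intro h
    apply_fun Complex.re at h
    simp [Complex.div_re] at h
    omega
  have h2 : ((n : ℂ) + Complex.I * t) / 2 ≠ 0 := by
    intro h
    apply_fun Complex.re at h
    simp [Complex.div_re] at h
    omega
  have e1' : ((((n : ℕ) + 2 : ℕ) : ℂ) - Complex.I * t) / 2 = ((n : ℂ) - Complex.I * t) / 2 + 1 := by
    push_cast; ring
  have e2' : ((((n : ℕ) + 2 : ℕ) : ℂ) + Complex.I * t) / 2 = ((n : ℂ) + Complex.I * t) / 2 + 1 := by
    push_cast; ring
  rw [G, G, e1', e2', Complex.Gamma_add_one _ h1, Complex.Gamma_add_one _ h2]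
  have key : ((n : ℂ) - Complex.I * t) / 2 * (((n : ℂ) + Complex.I * t) / 2)
      = ((((n : ℝ) ^ 2 + t ^ 2) / 4 : ℝ) : ℂ) := by
    push_cast
    linear_combination (-(t:ℂ)^2/4) * Complex.I_sq
  rw [← key]; ring



lemma exp_tendsto : Tendsto (fun t : ℝ => Real.exp (-(π * t))) atTop (nhds 0) :=
  Real.tendsto_exp_atBot.comp
    (tendsto_neg_atTop_atBot.comp (tendsto_id.const_mul_atTop Real.pi_pos))

lemma ratio_one : Tendsto (fun t : ℝ => G 1 t / (H 1 t : ℂ)) atTop (nhds 1) := by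
  have hre : Tendsto (fun t : ℝ => (1 + Real.exp (-(π * t)))⁻¹) atTop (nhds 1) := by
    have := (tendsto_const_nhds.add exp_tendsto).inv₀
      (by norm_num : ((1 : ℝ) + 0) ≠ 0)
    simpa using this
  have hC : Tendsto (fun t : ℝ => (((1 + Real.exp (-(π * t)))⁻¹ : ℝ) : ℂ)) atTop (nhds 1) := by
    rw [show ((1 : ℂ)) = ((1 : ℝ) : ℂ) by norm_num]
    exact (Complex.continuous_ofReal.tendsto 1).comp hre
  refine hC.congr fun t => ?_
  rw [G_one, H]
  rw [← Complex.ofReal_div]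
  congr 1
  have hc : Real.cosh (π * t / 2) = Real.exp (π * t / 2) * (1 + Real.exp (-(π * t))) / 2 := by
    rw [Real.cosh_eq, show -(π * t / 2) = π * t / 2 + -(π * t) by ring, Real.exp_add]
    ring
  rw [hc]
  have h1 : Real.exp (π * t / 2) * Real.exp (-(π * t) / 2) = 1 := by
    rw [← Real.exp_add, show π * t / 2 + -(π * t) / 2 = 0 by ring, Real.exp_zero]
  have e3 : 0 < 1 + Real.exp (-(π * t)) := by positivity
  have h1' : Real.exp (π * t / 2) * Real.exp (-(π * t / 2)) = 1 := by
    rw [← Real.exp_add]; simp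
  field_simp
  linear_combination h1'

lemma ratio_two : Tendsto (fun t : ℝ => G 2 t / (H 2 t : ℂ)) atTop (nhds 1) := by
  have hre : Tendsto (fun t : ℝ => (1 - Real.exp (-(π * t)))⁻¹) atTop (nhds 1) := by
    have := (tendsto_const_nhds.sub exp_tendsto).inv₀
      (by norm_num : ((1 : ℝ) - 0) ≠ 0)
    simpa using this
  have hC : Tendsto (fun t : ℝ => (((1 - Real.exp (-(π * t)))⁻¹ : ℝ) : ℂ)) atTop (nhds 1) := by
    rw [show ((1 : ℂ)) = ((1 : ℝ) : ℂ) by norm_num]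
    exact (Complex.continuous_ofReal.tendsto 1).comp hre
  refine hC.congr' ?_
  filter_upwards [eventually_gt_atTop (0 : ℝ)] with t ht
  rw [G_two ht, H]
  rw [← Complex.ofReal_div]
  congr 1
  have hc : Real.sinh (π * t / 2) = Real.exp (π * t / 2) * (1 - Real.exp (-(π * t))) / 2 := by
    rw [Real.sinh_eq, show -(π * t / 2) = π * t / 2 + -(π * t) by ring, Real.exp_add]
    ring
  rw [hc]
  have h1 : Real.exp (π * t / 2) * Real.exp (-(π * t) / 2) = 1 := by
    rw [← Real.exp_add, show π * t / 2 + -(π * t) / 2 = 0 by ring, Real.exp_zero]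
  have e3 : 0 < 1 - Real.exp (-(π * t)) := by
    have : Real.exp (-(π * t)) < 1 := by
      rw [Real.exp_lt_one_iff]
      nlinarith [Real.pi_pos]
    linarith
  have ht' : t ≠ 0 := ht.ne'
  have h1' : Real.exp (π * t / 2) * Real.exp (-(π * t / 2)) = 1 := by
    rw [← Real.exp_add]; simp
  field_simp
  linear_combination t * h1'

lemma ratio_all : ∀ N : ℕ, 1 ≤ N → Tendsto (fun t : ℝ => G N t / (H N t : ℂ)) atTop (nhds 1) := by
  intro N
  induction N using Nat.twoStepInduction with
  | zero => intro h; omega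
  | one => intro _; exact ratio_one
  | more n ih _ =>
    intro _
    match n, ih with
    | 0, _ => exact ratio_two
    | (m+1), ih =>
      have hm : 1 ≤ m + 1 := by omega
      have ihm := ih hm
      have hfac : Tendsto (fun t : ℝ => ((((m+1 : ℕ) : ℝ) ^ 2 + t ^ 2) / 4 / (t / 2) ^ 2 : ℝ))
          atTop (nhds 1) := by
        have h2 : Tendsto (fun t : ℝ => 1 + ((m+1 : ℕ) : ℝ) ^ 2 * (t ^ 2)⁻¹) atTop (nhds 1) := by
          have : Tendsto (fun t : ℝ => (t ^ 2)⁻¹) atTop (nhds 0) :=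
            tendsto_inv_atTop_zero.comp (tendsto_pow_atTop (two_ne_zero))
          simpa using tendsto_const_nhds.add (tendsto_const_nhds.mul this)
        refine h2.congr' ?_
        filter_upwards [eventually_gt_atTop (0 : ℝ)] with t ht
        have : t ≠ 0 := ht.ne'
        field_simp
        ring
      have hfacC : Tendsto (fun t : ℝ =>
          (((((m+1 : ℕ) : ℝ) ^ 2 + t ^ 2) / 4 / (t / 2) ^ 2 : ℝ) : ℂ)) atTop (nhds 1) := by
        rw [show ((1 : ℂ)) = ((1 : ℝ) : ℂ) by norm_num]
        exact (Complex.continuous_ofReal.tendsto 1).comp hfac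
      have key : ∀ t : ℝ, G (m+1+2) t / (H (m+1+2) t : ℂ)
          = (G (m+1) t / (H (m+1) t : ℂ))
            * (((((m+1 : ℕ) : ℝ) ^ 2 + t ^ 2) / 4 / (t / 2) ^ 2 : ℝ) : ℂ) := by
        intro t
        rw [G_rec (m+1) t hm]
        have hH : H (m+1+2) t = H (m+1) t * (t/2) ^ 2 := by
          rw [H, H, show (m+1+2) - 1 = (m+1-1) + 2 by omega, pow_add]
          ring
        rw [hH]
        push_cast
        rw [mul_div_mul_comm]
        ring
      rw [show ((1 : ℂ)) = 1 * 1 by norm_num]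
      exact (Tendsto.mul ihm hfacC).congr fun t => (key t).symm


lemma re_val' (N : ℕ) (t : ℝ) : ((((N:ℂ)) + Complex.I * t) / 2).re = N / 2 := by
  simp [Complex.div_re]

lemma beta_val (N : ℕ) (hN : 1 ≤ N) (t : ℝ) :
    Complex.betaIntegral (((N : ℂ) - Complex.I * t) / 2) (((N : ℂ) + Complex.I * t) / 2)
      = G N t / ((Nat.factorial (N - 1) : ℂ)) := by
  obtain ⟨m, rfl⟩ : ∃ m, N = m + 1 := ⟨N - 1, by omega⟩
  have ha : 0 < ((((m+1:ℕ):ℂ) - Complex.I * t) / 2).re := by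
    rw [re_val]; positivity
  have hb : 0 < ((((m+1:ℕ):ℂ) + Complex.I * t) / 2).re := by
    rw [re_val']; positivity
  have h := Complex.Gamma_mul_Gamma_eq_betaIntegral ha hb
  have hsum : (((m+1:ℕ):ℂ) - Complex.I * t) / 2 + (((m+1:ℕ):ℂ) + Complex.I * t) / 2
      = ((m:ℂ) + 1) := by push_cast; ring
  rw [hsum, Complex.Gamma_nat_eq_factorial m] at h
  have hm : ((Nat.factorial m : ℂ)) ≠ 0 := by
    exact_mod_cast Nat.factorial_ne_zero m
  rw [show (m+1) - 1 = m by omega, G]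
  rw [eq_div_iff hm, h]
  ring

lemma F_eq (N : ℕ) (hN : 1 ≤ N) (t : ℝ) :
    (∫ u : ℝ, ((Real.cosh u : ℂ)) ^ (-(N : ℤ)) * Complex.exp (-Complex.I * t * u))
      = 2 ^ (N - 1) * (G N t / ((Nat.factorial (N - 1) : ℂ))) := by
  rw [integral_eq_beta N hN t, beta_val N hN t]

end Stmt12Proof
end Stmt12AuxSection

open Stmt12Proof in
/-- Tail asymptotic (Eq. (21) of the paper) for sums of hyperbolic-secant variables:
with `p_N(z) = (1/(2π)) ∫ (cosh(ω/√N))^{-N} e^{-iωz} dω`, the ratio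
`p_N(z) / [(N^{N/2}/(N-1)!) z^{N-1} e^{-πz√N/2}]` tends to `1` as `z → +∞`. -/
theorem stmt_12 (N : ℕ) (hN : 1 ≤ N)
    (p : ℝ → ℂ)
    (hp : ∀ z : ℝ, p z = (1 / (2 * π)) *
      ∫ ω : ℝ, ((Real.cosh (ω / Real.sqrt N) : ℂ)) ^ (-(N : ℤ)) *
        Complex.exp (-Complex.I * ω * z)) :
    Tendsto (fun z : ℝ => p z /
        ((((N : ℝ) ^ ((N : ℝ) / 2) / (Nat.factorial (N - 1)) * z ^ (N - 1) *
          Real.exp (-(π * z * Real.sqrt N) / 2) : ℝ)) : ℂ))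
      atTop (nhds 1) := by
  have hN0 : (0:ℝ) < N := by exact_mod_cast hN
  have hsq : 0 < Real.sqrt N := Real.sqrt_pos.mpr hN0
  set c : ℝ := Real.sqrt N * 2 ^ (N-1) / (2 * π * (Nat.factorial (N-1))) with hc
  have hcpos : 0 < c := by
    have := Nat.factorial_pos (N-1)
    have : (0:ℝ) < (Nat.factorial (N-1) : ℝ) := by exact_mod_cast this
    have := Real.pi_pos
    positivity
  have hpf : ∀ z : ℝ, p z = (c : ℂ) * G N (Real.sqrt N * z) := by
    intro z
    rw [hp z]
    have hcm := MeasureTheory.Measure.integral_comp_mul_left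
      (fun ω : ℝ => ((Real.cosh (ω / Real.sqrt N) : ℂ)) ^ (-(N : ℤ)) *
        Complex.exp (-Complex.I * ω * z)) (Real.sqrt N)
    have hfun : (fun u : ℝ => ((Real.cosh ((Real.sqrt N * u) / Real.sqrt N) : ℂ)) ^ (-(N : ℤ)) *
          Complex.exp (-Complex.I * ((Real.sqrt N * u : ℝ) : ℂ) * z))
        = fun u : ℝ => ((Real.cosh u : ℂ)) ^ (-(N : ℤ)) *
          Complex.exp (-Complex.I * ((Real.sqrt N * z : ℝ) : ℂ) * u) := by
      funext u
      rw [mul_div_cancel_left₀ _ hsq.ne']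
      congr 1
      push_cast
      ring
    rw [hfun] at hcm
    rw [abs_of_pos (inv_pos.mpr hsq)] at hcm
    have hB : (∫ ω : ℝ, ((Real.cosh (ω / Real.sqrt N) : ℂ)) ^ (-(N : ℤ)) *
          Complex.exp (-Complex.I * ω * z))
        = (Real.sqrt N : ℂ) * ∫ u : ℝ, ((Real.cosh u : ℂ)) ^ (-(N : ℤ)) *
            Complex.exp (-Complex.I * ((Real.sqrt N * z : ℝ) : ℂ) * u) := by
      rw [hcm, Complex.real_smul]
      rw [← mul_assoc, ← Complex.ofReal_mul, mul_inv_cancel₀ hsq.ne']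
      simp
    rw [hB, F_eq N hN (Real.sqrt N * z)]
    have hfne : ((Nat.factorial (N-1) : ℂ)) ≠ 0 := by
      exact_mod_cast Nat.factorial_ne_zero (N-1)
    have hpine : ((π : ℝ) : ℂ) ≠ 0 := Complex.ofReal_ne_zero.mpr Real.pi_ne_zero
    rw [hc]
    push_cast
    field_simp
  have hHD : ∀ z : ℝ, 0 < z →
      ((N : ℝ) ^ ((N : ℝ) / 2) / (Nat.factorial (N - 1)) * z ^ (N - 1) *
        Real.exp (-(π * z * Real.sqrt N) / 2)) = c * H N (Real.sqrt N * z) := by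
    intro z hz
    rw [H, hc]
    have hs : Real.sqrt N ^ N = (N:ℝ) ^ ((N:ℝ)/2) := by
      rw [Real.sqrt_eq_rpow, ← Real.rpow_natCast ((N:ℝ) ^ ((1:ℝ)/2)) N,
        ← Real.rpow_mul hN0.le]
      congr 1
      ring
    have hpow : (Real.sqrt N * z / 2) ^ (N-1)
        = Real.sqrt N ^ (N-1) * z ^ (N-1) / 2 ^ (N-1) := by
      rw [div_pow, mul_pow]
    have hsplit : Real.sqrt N ^ (N-1) * Real.sqrt N = (N:ℝ) ^ ((N:ℝ)/2) := by
      rw [← hs, ← pow_succ, show (N-1)+1 = N by omega]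
    have hexp : -(π * (Real.sqrt N * z) / 2) = -(π * z * Real.sqrt N) / 2 := by ring
    rw [hpow, hexp]
    have hfne : ((Nat.factorial (N-1) : ℝ)) ≠ 0 := by
      exact_mod_cast Nat.factorial_ne_zero (N-1)
    have h2ne : ((2:ℝ)) ^ (N-1) ≠ 0 := by positivity
    have hpine : (π : ℝ) ≠ 0 := Real.pi_ne_zero
    field_simp
    rw [← hsplit]
    ring
  have hmain : Tendsto (fun z : ℝ => G N (Real.sqrt N * z) / (H N (Real.sqrt N * z) : ℂ))
      atTop (nhds 1) := by
    exact (ratio_all N hN).comp (tendsto_id.const_mul_atTop hsq)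
  refine hmain.congr' ?_
  filter_upwards [eventually_gt_atTop (0:ℝ)] with z hz
  rw [hpf z, hHD z hz]
  push_cast
  rw [mul_div_mul_left _ _ (by exact_mod_cast hcpos.ne' : ((c:ℝ):ℂ) ≠ 0)]
end
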